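/- Let G be a proper graph (maximum degree at most 4; every neighbor of any degree-4 vertex has degree at most 2; every degree-2 vertex has at least one neighbor of degree at least 3; every connected component has at least 6 vertices). If G has a vertex set S with |S| ≤ k such that G − S has maximum degree at most 2, then |V(G)| ≤ 100k. -/

import Mathlib

open Finset

lemma walk_closed {V : Type*} {G : SimpleGraph V} {A : Set V}
    (hA : ∀ a ∈ A, ∀ b, G.Adj a b → b ∈ A) :
    ∀ {a b : V}, G.Walk a b → a ∈ A → b ∈ A := by
  intro a b p
  induction p with
  | nil => exact id
  | cons h p ih => exact fun ha => ih (hA _ ha _ h)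

lemma supp_closed {V : Type*} {G : SimpleGraph V} {A : Set V}
    (hA : ∀ a ∈ A, ∀ b, G.Adj a b → b ∈ A) {v : V} (hv : v ∈ A) :
    (G.connectedComponentMk v).supp ⊆ A := by
  intro u hu
  rw [SimpleGraph.ConnectedComponent.mem_supp_iff] at hu
  have hr : G.Reachable v u := (SimpleGraph.ConnectedComponent.eq.mp hu).symm
  obtain ⟨p⟩ := hr
  exact walk_closed hA p hv

/-- a proper graph with a cPCP-set of size at most `k` has at most `100k`
vertices. -/
theorem stmt4 {V : Type*} [Fintype V] (G : SimpleGraph V) (k : ℕ)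
    (h1 : ∀ v, (G.neighborSet v).ncard ≤ 4)
    (h2 : ∀ v, (G.neighborSet v).ncard = 4 →
      ∀ w ∈ G.neighborSet v, (G.neighborSet w).ncard ≤ 2)
    (h3 : ∀ v, (G.neighborSet v).ncard = 2 →
      ∃ w ∈ G.neighborSet v, 3 ≤ (G.neighborSet w).ncard)
    (h4 : ∀ c : G.ConnectedComponent, 6 ≤ c.supp.ncard)
    (S : Set V) (hSk : S.ncard ≤ k)
    (hS : ∀ x ∉ S, {w | G.Adj x w ∧ w ∉ S}.ncard ≤ 2) :
    Fintype.card V ≤ 100 * k := by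
  classical
  haveI : DecidableRel G.Adj := Classical.decRel _
  -- degrees
  have hdeg : ∀ v : V, (G.neighborSet v).ncard = G.degree v := by
    intro v
    rw [← Nat.card_coe_set_eq, Nat.card_eq_fintype_card]
    exact (Fintype.card_congr (Equiv.refl _)).trans (G.card_neighborSet_eq_degree v)
  have hd4 : ∀ v : V, G.degree v ≤ 4 := fun v => (hdeg v) ▸ h1 v
  -- degree ≥ 1 everywhere
  have hd1 : ∀ v : V, 1 ≤ G.degree v := by
    intro v
    by_contra hcon
    have hdv : G.degree v = 0 := by omega
    have hno : ∀ b : V, ¬ G.Adj v b := by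
      intro b hb
      have : b ∈ G.neighborFinset v := (G.mem_neighborFinset v b).mpr hb
      rw [Finset.card_eq_zero.mp hdv] at this
      exact absurd this (Finset.notMem_empty b)
    have hsub : (G.connectedComponentMk v).supp ⊆ ({v} : Set V) := by
      apply supp_closed (A := ({v} : Set V))
      · intro a ha b hab
        rw [Set.mem_singleton_iff] at ha
        subst ha
        exact absurd hab (hno b)
      · rfl
    have h6 := h4 (G.connectedComponentMk v)
    have := Set.ncard_le_ncard hsub (Set.toFinite _)
    rw [Set.ncard_singleton] at this
    omega
  -- the three degree classes
  set B1 : Finset V := Finset.univ.filter (fun v => G.degree v = 1) with hB1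
  set B2 : Finset V := Finset.univ.filter (fun v => G.degree v = 2) with hB2
  set B3 : Finset V := Finset.univ.filter (fun v => 3 ≤ G.degree v) with hB3
  have hSf : S.toFinset.card ≤ k := by rw [← Set.ncard_eq_toFinset_card']; exact hSk
  -- |B3| ≤ 5k
  have hB3sub : B3 ⊆ S.toFinset ∪ S.toFinset.biUnion (fun s => G.neighborFinset s) := by
    intro v hv
    rw [hB3, Finset.mem_filter] at hv
    by_cases hvS : v ∈ S
    · exact Finset.mem_union_left _ (Set.mem_toFinset.mpr hvS)
    · apply Finset.mem_union_right
      have hsplit : G.neighborSet v ⊆ {w | G.Adj v w ∧ w ∉ S} ∪ {w | G.Adj v w ∧ w ∈ S} := by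
        intro w hw
        by_cases hwS : w ∈ S
        · exact Or.inr ⟨hw, hwS⟩
        · exact Or.inl ⟨hw, hwS⟩
      by_cases hne : ∃ s ∈ S, G.Adj v s
      · obtain ⟨s, hsS, hadj⟩ := hne
        exact Finset.mem_biUnion.mpr ⟨s, Set.mem_toFinset.mpr hsS,
          (G.mem_neighborFinset s v).mpr hadj.symm⟩
      · exfalso
        push_neg at hne
        have hsub2 : G.neighborSet v ⊆ {w | G.Adj v w ∧ w ∉ S} := by
          intro w hw
          exact ⟨hw, fun hwS => hne w hwS hw⟩
        have := Set.ncard_le_ncard hsub2 (Set.toFinite _)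
        have h2' := hS v hvS
        have h3' : 3 ≤ (G.neighborSet v).ncard := by rw [hdeg v]; exact hv.2
        omega
  have hB3card : B3.card ≤ 5 * k := by
    calc B3.card ≤ (S.toFinset ∪ S.toFinset.biUnion (fun s => G.neighborFinset s)).card :=
          Finset.card_le_card hB3sub
      _ ≤ S.toFinset.card + (S.toFinset.biUnion (fun s => G.neighborFinset s)).card :=
          Finset.card_union_le _ _
      _ ≤ S.toFinset.card + ∑ s ∈ S.toFinset, (G.neighborFinset s).card := by
          gcongr
          exact Finset.card_biUnion_le
      _ ≤ S.toFinset.card + ∑ s ∈ S.toFinset, 4 := by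
          gcongr with s hs
          exact hd4 s
      _ = S.toFinset.card + S.toFinset.card * 4 := by rw [Finset.sum_const, smul_eq_mul]
      _ ≤ k + k * 4 := by gcongr
      _ = 5 * k := by ring
  -- |B2| ≤ 4 |B3|
  have hB2sub : B2 ⊆ B3.biUnion (fun u => G.neighborFinset u) := by
    intro v hv
    rw [hB2, Finset.mem_filter] at hv
    obtain ⟨w, hw, hw3⟩ := h3 v (by rw [hdeg v]; exact hv.2)
    rw [hdeg w] at hw3
    refine Finset.mem_biUnion.mpr ⟨w, ?_, ?_⟩
    · rw [hB3, Finset.mem_filter]; exact ⟨Finset.mem_univ _, hw3⟩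
    · exact (G.mem_neighborFinset w v).mpr ((G.mem_neighborSet v w).mp hw).symm
  have hB2card : B2.card ≤ 4 * B3.card := by
    calc B2.card ≤ (B3.biUnion (fun u => G.neighborFinset u)).card :=
          Finset.card_le_card hB2sub
      _ ≤ ∑ u ∈ B3, (G.neighborFinset u).card := Finset.card_biUnion_le
      _ ≤ ∑ u ∈ B3, 4 := by gcongr with u hu; exact hd4 u
      _ = 4 * B3.card := by rw [Finset.sum_const, smul_eq_mul]; ring
  -- |B1| ≤ 8 |B3|
  have hB1sub : B1 ⊆ B3.biUnion (fun u => G.neighborFinset u ∪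
      ((G.neighborFinset u).filter (fun m => G.degree m = 2)).biUnion
        (fun m => (G.neighborFinset m).erase u)) := by
    intro v hv
    rw [hB1, Finset.mem_filter] at hv
    have hcard : (G.neighborFinset v).card = 1 := hv.2
    obtain ⟨w, hwmem⟩ := Finset.card_eq_one.mp hcard
    have hadjvw : G.Adj v w := (G.mem_neighborFinset v w).mp (hwmem ▸ Finset.mem_singleton_self w)
    -- degree of w
    have hdw1 : 1 ≤ G.degree w := hd1 w
    rcases Nat.lt_or_ge (G.degree w) 3 with hlt | hge
    · interval_cases h : (G.degree w)
      · -- degree w = 1 : component {v, w}, contradiction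
        exfalso
        have hvw : v ≠ w := G.ne_of_adj hadjvw
        have hNw : G.neighborFinset w = {v} := by
          apply Finset.eq_singleton_iff_unique_mem.mpr
          constructor
          · exact (G.mem_neighborFinset w v).mpr hadjvw.symm
          · intro x hx
            have : (G.neighborFinset w).card ≤ 1 := h.le
            exact Finset.card_le_one.mp this x hx v ((G.mem_neighborFinset w v).mpr hadjvw.symm)
        have hsub : (G.connectedComponentMk v).supp ⊆ ({v, w} : Set V) := by
          apply supp_closed (A := ({v, w} : Set V))
          · intro a ha b hab
            rcases ha with ha | ha
            · subst ha
              have : b ∈ G.neighborFinset a := (G.mem_neighborFinset a b).mpr hab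
              rw [hwmem] at this
              right; exact Finset.mem_singleton.mp this
            · rw [Set.mem_singleton_iff] at ha
              subst ha
              have : b ∈ G.neighborFinset a := (G.mem_neighborFinset a b).mpr hab
              rw [hNw] at this
              left; exact Finset.mem_singleton.mp this
          · left; rfl
        have h6 := h4 (G.connectedComponentMk v)
        have hle := Set.ncard_le_ncard hsub (Set.toFinite _)
        have : ({v, w} : Set V).ncard ≤ 2 := by
          apply le_trans (Set.ncard_insert_le _ _)
          simp [Set.ncard_singleton]
        omega
      · -- degree w = 2 : h3 gives u with degree ≥ 3
        obtain ⟨u, hu, hu3⟩ := h3 w (by rw [hdeg w]; exact h)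
        rw [hdeg u] at hu3
        have huv : u ≠ v := by
          intro he; subst he
          rw [hv.2] at hu3; omega
        refine Finset.mem_biUnion.mpr ⟨u, ?_, ?_⟩
        · rw [hB3, Finset.mem_filter]; exact ⟨Finset.mem_univ _, hu3⟩
        · apply Finset.mem_union_right
          refine Finset.mem_biUnion.mpr ⟨w, ?_, ?_⟩
          · rw [Finset.mem_filter]
            exact ⟨(G.mem_neighborFinset u w).mpr ((G.mem_neighborSet w u).mp hu).symm, h⟩
          · apply Finset.mem_erase.mpr
            exact ⟨fun he => huv (he.symm), (G.mem_neighborFinset w v).mpr hadjvw.symm⟩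
    · -- degree w ≥ 3
      refine Finset.mem_biUnion.mpr ⟨w, ?_, ?_⟩
      · rw [hB3, Finset.mem_filter]; exact ⟨Finset.mem_univ _, hge⟩
      · exact Finset.mem_union_left _ ((G.mem_neighborFinset w v).mpr hadjvw.symm)
  have hB1card : B1.card ≤ 8 * B3.card := by
    calc B1.card ≤ (B3.biUnion (fun u => G.neighborFinset u ∪
        ((G.neighborFinset u).filter (fun m => G.degree m = 2)).biUnion
          (fun m => (G.neighborFinset m).erase u))).card := Finset.card_le_card hB1sub
      _ ≤ ∑ u ∈ B3, (G.neighborFinset u ∪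
          ((G.neighborFinset u).filter (fun m => G.degree m = 2)).biUnion
            (fun m => (G.neighborFinset m).erase u)).card := Finset.card_biUnion_le
      _ ≤ ∑ u ∈ B3, 8 := by
          apply Finset.sum_le_sum
          intro u hu
          calc (G.neighborFinset u ∪ _).card
              ≤ (G.neighborFinset u).card +
                (((G.neighborFinset u).filter (fun m => G.degree m = 2)).biUnion
                  (fun m => (G.neighborFinset m).erase u)).card := Finset.card_union_le _ _
            _ ≤ 4 + ∑ m ∈ (G.neighborFinset u).filter (fun m => G.degree m = 2),
                  ((G.neighborFinset m).erase u).card := by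
                gcongr
                · exact hd4 u
                · exact Finset.card_biUnion_le
            _ ≤ 4 + ∑ m ∈ (G.neighborFinset u).filter (fun m => G.degree m = 2), 1 := by
                gcongr with m hm
                rw [Finset.mem_filter] at hm
                have humem : u ∈ G.neighborFinset m :=
                  (G.mem_neighborFinset m u).mpr ((G.mem_neighborFinset u m).mp hm.1).symm
                rw [Finset.card_erase_of_mem humem]
                have h2m : (G.neighborFinset m).card = 2 := hm.2
                omega
            _ ≤ 4 + ∑ m ∈ G.neighborFinset u, 1 := by
                gcongr
                exact Finset.filter_subset _ _
            _ = 4 + (G.neighborFinset u).card := by rw [Finset.sum_const, smul_eq_mul, mul_one]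
            _ ≤ 4 + 4 := by gcongr; exact hd4 u
            _ = 8 := rfl
      _ = 8 * B3.card := by rw [Finset.sum_const, smul_eq_mul]; ring
  -- put together
  have hcover : (Finset.univ : Finset V) ⊆ B1 ∪ B2 ∪ B3 := by
    intro v _
    have := hd1 v
    rcases Nat.lt_or_ge (G.degree v) 3 with hlt | hge
    · interval_cases h : (G.degree v)
      · exact Finset.mem_union_left _ (Finset.mem_union_left _
          (by rw [hB1, Finset.mem_filter]; exact ⟨Finset.mem_univ _, h⟩))
      · exact Finset.mem_union_left _ (Finset.mem_union_right _
          (by rw [hB2, Finset.mem_filter]; exact ⟨Finset.mem_univ _, h⟩))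
    · exact Finset.mem_union_right _
        (by rw [hB3, Finset.mem_filter]; exact ⟨Finset.mem_univ _, hge⟩)
  calc Fintype.card V = (Finset.univ : Finset V).card := rfl
    _ ≤ (B1 ∪ B2 ∪ B3).card := Finset.card_le_card hcover
    _ ≤ B1.card + B2.card + B3.card :=
        le_trans (Finset.card_union_le _ _) (by gcongr; exact Finset.card_union_le _ _)
    _ ≤ 8 * B3.card + 4 * B3.card + B3.card := by gcongr
    _ = 13 * B3.card := by ring
    _ ≤ 13 * (5 * k) := by gcongr
    _ ≤ 100 * k := by omega
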